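/- Let Λ be a lattice in ℝ² with ℤ-basis (λ₁, λ₂), and let U = {2sλ₁ + tλ₂ : s, t ∈ (0,1)} be the open parallelogram with corners 0, 2λ₁, λ₂, 2λ₁ + λ₂. Then π_Λ is injective on U: if x, x' ∈ U lie in the same Γ_Λ-orbit, then x = x'. -/

import Mathlib

set_option maxHeartbeats 1000000


/-- The plane ℝ². -/
abbrev V2 : Type := EuclideanSpace ℝ (Fin 2)

/-- The `Γ_Λ`-orbit of `x`: the set `{2λ + x : λ ∈ Λ} ∪ {2λ − x : λ ∈ Λ}`. -/
def orbitG (Λ : AddSubgroup V2) (x : V2) : Set V2 :=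
  {y : V2 | ∃ l ∈ Λ, y = (2:ℝ) • l + x ∨ y = (2:ℝ) • l - x}

/-- Let `Λ` be a lattice in ℝ² with ℤ-basis `(λ₁, λ₂)` and let
`U = {2sλ₁ + tλ₂ : s, t ∈ (0,1)}` be the open parallelogram with corners
`0, 2λ₁, λ₂, 2λ₁ + λ₂`.  Then `π_Λ` is injective on `U`: if `x, x' ∈ U` lie in the same
`Γ_Λ`-orbit, then `x = x'`. -/
theorem open_parallelogram_injective
    (Λ : AddSubgroup V2) (l1 l2 : V2)
    (hind : LinearIndependent ℝ ![l1, l2])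
    (hmem : ∀ x : V2, x ∈ Λ ↔ ∃ a b : ℤ, x = a • l1 + b • l2)
    (x x' : V2)
    (hx : ∃ s t : ℝ, s ∈ Set.Ioo (0:ℝ) 1 ∧ t ∈ Set.Ioo (0:ℝ) 1 ∧
      x = (2 * s) • l1 + t • l2)
    (hx' : ∃ s t : ℝ, s ∈ Set.Ioo (0:ℝ) 1 ∧ t ∈ Set.Ioo (0:ℝ) 1 ∧
      x' = (2 * s) • l1 + t • l2)
    (horb : x' ∈ orbitG Λ x) :
    x = x' := by
  obtain ⟨s, t, hs, ht, hxeq⟩ := hx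
  obtain ⟨s', t', hs', ht', hx'eq⟩ := hx'
  obtain ⟨l, hl, hcase⟩ := horb
  rw [hmem] at hl
  obtain ⟨a, b, hlab⟩ := hl
  have hzs1 : (a : ℤ) • l1 = (a : ℝ) • l1 := by
    rw [Int.cast_smul_eq_zsmul]
  have hzs2 : (b : ℤ) • l2 = (b : ℝ) • l2 := by
    rw [Int.cast_smul_eq_zsmul]
  have key : ∀ c1 c2 : ℝ, c1 • l1 + c2 • l2 = 0 → c1 = 0 ∧ c2 = 0 := fun c1 c2 h =>
    hind.eq_zero_of_pair h
  rcases hcase with hcase | hcase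
  · have h0 : (2 * s' - 2 * s - 2 * (a : ℝ)) • l1 + (t' - t - 2 * (b : ℝ)) • l2 = 0 := by
      rw [hxeq, hx'eq, hlab, hzs1, hzs2] at hcase
      linear_combination (norm := module) hcase
    obtain ⟨h1, h2⟩ := key _ _ h0
    have ha : a = 0 := by
      have h1' : (-1 : ℝ) < (a : ℝ) ∧ (a : ℝ) < 1 := by
        constructor <;> linarith [hs.1, hs.2, hs'.1, hs'.2]
      have : (-1 : ℤ) < a ∧ a < 1 := by exact_mod_cast h1'
      omega
    have hb : b = 0 := by
      have h2' : (-1 : ℝ) < 2 * (b : ℝ) ∧ 2 * (b : ℝ) < 1 := by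
        constructor <;> linarith [ht.1, ht.2, ht'.1, ht'.2]
      have : (-1 : ℤ) < 2 * b ∧ 2 * b < 1 := by exact_mod_cast h2'
      omega
    rw [ha] at h1
    rw [hb] at h2
    have hss : s = s' := by push_cast at h1; linarith
    have htt : t = t' := by push_cast at h2; linarith
    rw [hxeq, hx'eq, hss, htt]
  · exfalso
    have h0 : (2 * (a : ℝ) - 2 * s - 2 * s') • l1 + (2 * (b : ℝ) - t - t') • l2 = 0 := by
      rw [hxeq, hx'eq, hlab, hzs1, hzs2] at hcase
      linear_combination (norm := module) -hcase
    obtain ⟨h1, h2⟩ := key _ _ h0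
    have h2' : (0 : ℝ) < 2 * (b : ℝ) ∧ 2 * (b : ℝ) < 2 := by
      constructor <;> linarith [ht.1, ht.2, ht'.1, ht'.2]
    have : (0 : ℤ) < 2 * b ∧ 2 * b < 2 := by exact_mod_cast h2'
    omega
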